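/- arXiv:2506.04883 — 2 statements merged into one kernel-verified Lean document; each statement's English description precedes it below -/
import Mathlib

section
/- For every positive integer n, one has ω(2^n − 1) ≤ ∑_{d ∣ n} ω(Φ_d(2)) ≤ ω(2^n − 1) + Ω(n), where the sum is over all positive divisors d of n. -/
/-- `ω(n)`: the number of distinct prime factors of `n`. -/
def omega (n : ℕ) : ℕ := n.primeFactors.card

/-- `Ω(n)`: the number of prime factors of `n` counted with multiplicity. -/
def bigOmega (n : ℕ) : ℕ := n.primeFactorsList.length

/-- `Φ_d(2)`: the value of the `d`-th cyclotomic polynomial at `2`, as a natural number. -/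
noncomputable def Phi2 (d : ℕ) : ℕ := ((Polynomial.cyclotomic d ℤ).eval 2).toNat

open Polynomial Finset

lemma phi2_int_pos (d : ℕ) : 0 < (Polynomial.cyclotomic d ℤ).eval 2 :=
  cyclotomic_pos' d (by norm_num)

lemma phi2_cast (d : ℕ) : (Phi2 d : ℤ) = (cyclotomic d ℤ).eval 2 :=
  Int.toNat_of_nonneg (phi2_int_pos d).le

lemma phi2_pos (d : ℕ) : 0 < Phi2 d := by
  have := phi2_int_pos d
  unfold Phi2
  omega

lemma phi2_dvd (d : ℕ) : Phi2 d ∣ 2 ^ d - 1 := by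
  have h : (cyclotomic d ℤ).eval 2 ∣ (X ^ d - 1 : ℤ[X]).eval 2 :=
    eval_dvd (cyclotomic.dvd_X_pow_sub_one d ℤ)
  rw [eval_sub, eval_pow, eval_X, eval_one] at h
  have h2 : ((2 ^ d - 1 : ℕ) : ℤ) = 2 ^ d - 1 := by
    have : (1 : ℕ) ≤ 2 ^ d := Nat.one_le_two_pow
    push_cast [this]
    ring
  have : (Phi2 d : ℤ) ∣ ((2 ^ d - 1 : ℕ) : ℤ) := by
    rw [phi2_cast, h2]; exact h
  exact_mod_cast this

lemma prod_phi2 {n : ℕ} (hn : 0 < n) : ∏ d ∈ n.divisors, Phi2 d = 2 ^ n - 1 := by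
  have h := congrArg (Polynomial.eval (2 : ℤ)) (prod_cyclotomic_eq_X_pow_sub_one hn ℤ)
  rw [eval_prod, eval_sub, eval_pow, eval_X, eval_one] at h
  have h2 : ((2 ^ n - 1 : ℕ) : ℤ) = 2 ^ n - 1 := by
    have : (1 : ℕ) ≤ 2 ^ n := Nat.one_le_two_pow
    push_cast [this]
    ring
  have : ((∏ d ∈ n.divisors, Phi2 d : ℕ) : ℤ) = ((2 ^ n - 1 : ℕ) : ℤ) := by
    push_cast
    rw [h2, ← h]
    exact Finset.prod_congr rfl fun d _ => phi2_cast d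
  exact_mod_cast this

/-- If `p ∣ Φ_d(2)` then `2` is a primitive `(d / p ^ d.factorization p)`-th root of unity mod `p`. -/
lemma phi2_primitiveRoot {p d : ℕ} (hp : p.Prime) (hd : 0 < d) (hdvd : p ∣ Phi2 d) :
    IsPrimitiveRoot (2 : ZMod p) ((d / p ^ d.factorization p)) := by
  haveI : Fact p.Prime := ⟨hp⟩
  have hm : ¬ p ∣ (d / p ^ d.factorization p) := Nat.not_dvd_ordCompl hp hd.ne'
  haveI : NeZero (((d / p ^ d.factorization p : ℕ) : ZMod p)) := ⟨by
    rw [Ne, ZMod.natCast_eq_zero_iff]; exact hm⟩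
  have hroot : (cyclotomic (p ^ d.factorization p * (d / p ^ d.factorization p)) (ZMod p)).IsRoot 2 := by
    rw [Nat.ordProj_mul_ordCompl_eq_self]
    have hz : (((cyclotomic d ℤ).eval 2 : ℤ) : ZMod p) = 0 := by
      rw [ZMod.intCast_zmod_eq_zero_iff_dvd, ← phi2_cast]
      exact_mod_cast hdvd
    have hmap : (cyclotomic d (ZMod p)).eval ((2 : ℤ) : ZMod p) =
        (((cyclotomic d ℤ).eval 2 : ℤ) : ZMod p) := by
      rw [← map_cyclotomic d (Int.castRingHom (ZMod p))]
      exact eval_intCast_map (Int.castRingHom (ZMod p)) (cyclotomic d ℤ) 2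
    have : ((2 : ℤ) : ZMod p) = (2 : ZMod p) := by push_cast; ring
    rw [IsRoot.def, ← this, hmap, hz]
  exact isRoot_cyclotomic_prime_pow_mul_iff_of_charP.mp hroot

/-- The number of divisors `d` of `n` with `p ∣ Φ_d(2)` is at most `v_p(n) + 1`. -/
lemma count_divisors_le {n p : ℕ} (hn : n ≠ 0) (hp : p.Prime) :
    (n.divisors.filter fun d => p ∈ (Phi2 d).primeFactors).card ≤ n.factorization p + 1 := by
  have := Finset.card_le_card_of_injOn (f := fun d : ℕ => d.factorization p)
    (s := n.divisors.filter fun d => p ∈ (Phi2 d).primeFactors)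
    (t := Finset.range (n.factorization p + 1)) ?_ ?_
  · simpa using this
  · intro d hd
    simp only [Finset.mem_coe, Finset.mem_filter, Nat.mem_divisors] at hd
    obtain ⟨⟨hdvd, _⟩, _⟩ := hd
    have hd0 : d ≠ 0 := by rintro rfl; exact hn (zero_dvd_iff.mp hdvd)
    have hle := (Nat.factorization_le_iff_dvd hd0 hn).mpr hdvd
    simp only [Finset.mem_coe, Finset.mem_range, Nat.lt_succ_iff]
    exact hle p
  · intro d1 h1 d2 h2 heq
    simp only [Finset.coe_filter, Set.mem_setOf_eq, Nat.mem_divisors] at h1 h2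
    have hd1 : 0 < d1 := Nat.pos_of_ne_zero (by rintro rfl; exact hn (zero_dvd_iff.mp h1.1.1))
    have hd2 : 0 < d2 := Nat.pos_of_ne_zero (by rintro rfl; exact hn (zero_dvd_iff.mp h2.1.1))
    have hr1 := phi2_primitiveRoot hp hd1 (Nat.dvd_of_mem_primeFactors h1.2)
    have hr2 := phi2_primitiveRoot hp hd2 (Nat.dvd_of_mem_primeFactors h2.2)
    have hcompl : (d1 / p ^ d1.factorization p) = (d2 / p ^ d2.factorization p) := hr1.unique hr2
    have e1 := Nat.ordProj_mul_ordCompl_eq_self d1 p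
    have e2 := Nat.ordProj_mul_ordCompl_eq_self d2 p
    simp only at heq
    rw [← e1, ← e2, hcompl, heq]

lemma bigOmega_eq_sum (n : ℕ) :
    bigOmega n = ∑ p ∈ n.primeFactors, n.factorization p := by
  unfold bigOmega
  rw [← Nat.toFinset_factors]
  have h := Multiset.toFinset_sum_count_eq (↑n.primeFactorsList : Multiset ℕ)
  simp only [Multiset.coe_count, Multiset.coe_card] at h
  rw [show (n.primeFactorsList.toFinset : Finset ℕ)
      = (↑n.primeFactorsList : Multiset ℕ).toFinset from rfl, ← h]
  exact Finset.sum_congr rfl fun p _ => Nat.primeFactorsList_count_eq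

/-- `ω(2^n - 1) ≤ ∑_{d ∣ n} ω(Φ_d(2)) ≤ ω(2^n - 1) + Ω(n)`. -/
theorem omega_mersenne_sum_cyclotomic (n : ℕ) (hn : 1 ≤ n) :
    omega (2 ^ n - 1) ≤ ∑ d ∈ n.divisors, omega (Phi2 d) ∧
    ∑ d ∈ n.divisors, omega (Phi2 d) ≤ omega (2 ^ n - 1) + bigOmega n := by
  have hn0 : n ≠ 0 := by omega
  have hM : (2 : ℕ) ^ n - 1 ≠ 0 := by
    have : 2 ≤ 2 ^ n := Nat.le_self_pow hn0 2
    omega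
  set S := (2 ^ n - 1).primeFactors with hS
  -- every prime factor of Phi2 d (d ∣ n) divides 2^n - 1
  have hsub : ∀ d ∈ n.divisors, (Phi2 d).primeFactors ⊆ S := by
    intro d hd q hq
    rw [Nat.mem_primeFactors] at hq ⊢
    obtain ⟨hq1, hq2, _⟩ := hq
    refine ⟨hq1, hq2.trans ((phi2_dvd d).trans ?_), hM⟩
    obtain ⟨c, rfl⟩ := (Nat.mem_divisors.mp hd).1
    calc 2 ^ d - 1 ∣ (2 ^ d) ^ c - 1 ^ c := by
            exact Nat.sub_dvd_pow_sub_pow (2 ^ d) 1 c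
      _ = 2 ^ (d * c) - 1 := by rw [one_pow, pow_mul]
  constructor
  · -- lower bound
    have hsubU : S ⊆ n.divisors.biUnion fun d => (Phi2 d).primeFactors := by
      intro q hq
      rw [hS, Nat.mem_primeFactors] at hq
      obtain ⟨hq1, hq2, _⟩ := hq
      rw [← prod_phi2 (by omega)] at hq2
      obtain ⟨d, hd, hdvd⟩ := hq1.prime.exists_mem_finset_dvd hq2
      exact Finset.mem_biUnion.mpr ⟨d, hd, Nat.mem_primeFactors.mpr ⟨hq1, hdvd, (phi2_pos d).ne'⟩⟩
    calc omega (2 ^ n - 1) = S.card := rfl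
      _ ≤ (n.divisors.biUnion fun d => (Phi2 d).primeFactors).card :=
          Finset.card_le_card hsubU
      _ ≤ ∑ d ∈ n.divisors, (Phi2 d).primeFactors.card := Finset.card_biUnion_le
      _ = ∑ d ∈ n.divisors, omega (Phi2 d) := rfl
  · -- upper bound: double counting
    have hswap : ∑ d ∈ n.divisors, omega (Phi2 d)
        = ∑ p ∈ S, (n.divisors.filter fun d => p ∈ (Phi2 d).primeFactors).card := by
      have : ∀ d ∈ n.divisors, omega (Phi2 d)
          = ∑ p ∈ S, if p ∈ (Phi2 d).primeFactors then 1 else 0 := by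
        intro d hd
        rw [← Finset.card_filter, Finset.filter_mem_eq_inter,
          Finset.inter_eq_right.mpr (hsub d hd)]
        rfl
      rw [Finset.sum_congr rfl this, Finset.sum_comm]
      exact Finset.sum_congr rfl fun p _ => (Finset.card_filter _ _).symm
    rw [hswap]
    have hbound : ∑ p ∈ S, (n.divisors.filter fun d => p ∈ (Phi2 d).primeFactors).card
        ≤ ∑ p ∈ S, (n.factorization p + 1) :=
      Finset.sum_le_sum fun p hp =>
        count_divisors_le hn0 (Nat.prime_of_mem_primeFactors hp)
    refine hbound.trans ?_
    have hsum : ∑ p ∈ S, n.factorization p ≤ bigOmega n := by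
      rw [bigOmega_eq_sum]
      have hzero : ∀ p ∈ S, p ∉ n.primeFactors → n.factorization p = 0 := by
        intro p _ hp
        rw [← Nat.support_factorization] at hp
        exact Finsupp.notMem_support_iff.mp hp
      calc ∑ p ∈ S, n.factorization p
          = ∑ p ∈ S ∩ n.primeFactors, n.factorization p := by
            refine (Finset.sum_subset Finset.inter_subset_left ?_).symm
            intro p hp hnp
            exact hzero p hp (fun h => hnp (Finset.mem_inter.mpr ⟨hp, h⟩))
        _ ≤ ∑ p ∈ n.primeFactors, n.factorization p :=
            Finset.sum_le_sum_of_subset Finset.inter_subset_right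
    have hcard : S.card = omega (2 ^ n - 1) := rfl
    calc ∑ p ∈ S, (n.factorization p + 1)
        = (∑ p ∈ S, n.factorization p) + S.card := by
          rw [Finset.sum_add_distrib, Finset.sum_const, smul_eq_mul, mul_one]
      _ ≤ bigOmega n + omega (2 ^ n - 1) := Nat.add_le_add hsum hcard.le
      _ = omega (2 ^ n - 1) + bigOmega n := Nat.add_comm _ _
end

section
/- For every positive integer N, writing N = 2^a·M with M odd (so M is the odd part of N), one has 4·τ(2^N + 1) ≥ 2^{τ(M)}; equivalently, τ(2^N + 1) ≥ 2^{τ(M) − 2}. -/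
open Polynomial Finset

/-- `τ(n)`: the number of positive divisors of `n`. -/
def tau (n : ℕ) : ℕ := n.divisors.card

namespace TauAux

lemma odd_dvd {d m : ℕ} (hm : Odd m) (h : d ∣ m) : Odd d := by
  by_contra hd
  rw [Nat.not_odd_iff_even] at hd
  rw [← Nat.not_even_iff_odd] at hm
  exact hm (even_iff_two_dvd.mpr ((even_iff_two_dvd.mp hd).trans h))

/-- 3j < 2^(j-1) for j ≥ 5 -/

lemma H1 {j : ℕ} (hj : 5 ≤ j) : 3 * j < 2 ^ (j - 1) := by
  obtain ⟨i, rfl⟩ : ∃ i, j = i + 5 := ⟨j - 5, by omega⟩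
  clear hj
  induction i with
  | zero => norm_num
  | succ n ih =>
    have h16 : 16 ≤ 2 ^ (n + 5 - 1) := by
      calc (16:ℕ) = 2 ^ 4 := by norm_num
      _ ≤ 2 ^ (n + 5 - 1) := Nat.pow_le_pow_right (by norm_num) (by omega)
    have h2 : (2:ℕ) ^ (n + 1 + 5 - 1) = 2 ^ (n + 5 - 1) * 2 := by
      rw [show n + 1 + 5 - 1 = (n + 5 - 1) + 1 by omega, pow_succ]
    omega

/-- prime power inequality : 3 q^k < 2^(q^(k-1)(q-1)) for q ≥ 3, k ≥ 1, q^k ≥ 5 -/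

lemma PP {q k : ℕ} (hq : 3 ≤ q) (hk : 1 ≤ k) (h5 : 5 ≤ q ^ k) :
    3 * q ^ k < 2 ^ (q ^ (k - 1) * (q - 1)) := by
  induction k with
  | zero => omega
  | succ n ih =>
    rcases Nat.eq_zero_or_pos n with rfl | hn
    · simpa using H1 (by simpa using h5)
    · rcases Nat.lt_or_ge (q ^ n) 5 with hs | hs
      · -- q^n < 5, n ≥ 1, q ≥ 3 : q ∈ {3,4}, n = 1
        have hq4 : q ≤ 4 := by
          by_contra h
          have : 5 ≤ q ^ n := le_trans (by omega) (Nat.le_self_pow (by omega) q)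
          omega
        have hn1 : n = 1 := by
          by_contra h
          have h2n : 2 ≤ n := by omega
          have hb : 3 ^ 2 ≤ q ^ 2 := Nat.pow_le_pow_left hq 2
          have hc : q ^ 2 ≤ q ^ n := Nat.pow_le_pow_right (by omega) h2n
          omega
        subst hn1
        interval_cases q <;> norm_num
      · have hE := ih hn hs
        set E := q ^ (n - 1) * (q - 1) with hEdef
        have hexp : q ^ (n + 1 - 1) * (q - 1) = E * q := by
          rw [hEdef]
          obtain ⟨m, rfl⟩ : ∃ m, n = m + 1 := ⟨n - 1, by omega⟩
          simp only [Nat.add_sub_cancel]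
          rw [pow_succ]
          ring
        rw [hexp, pow_mul]
        have h1 : 3 * q ^ n + 1 ≤ 2 ^ E := hE
        have h2 : (3 * q ^ n + 1) ^ 2 ≤ (2 ^ E) ^ 2 := Nat.pow_le_pow_left h1 2
        have h3 : (2 ^ E) ^ 2 ≤ (2 ^ E) ^ q := Nat.pow_le_pow_right Nat.one_le_two_pow (by omega)
        have h4 : 3 * q ^ (n + 1) < (3 * q ^ n + 1) ^ 2 := by
          have e1 : (3 * q ^ n + 1) ^ 2 = 9 * (q ^ n * q ^ n) + 6 * q ^ n + 1 := by ring
          have e2 : q ^ (n + 1) = q ^ n * q := pow_succ q n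
          have e3 : q ^ n * q ≤ q ^ n * q ^ n :=
            Nat.mul_le_mul_left _ (Nat.le_self_pow (by omega) q)
          omega
        omega

lemma four_le_of_two_pow {X u : ℕ} (hu : 5 ≤ u) (h : 3 * u < 2 ^ X) : 4 ≤ X := by
  by_contra h'
  have : (2:ℕ) ^ X ≤ 2 ^ 3 := Nat.pow_le_pow_right (by norm_num) (by omega)
  omega

/-- main arithmetic inequality : 3m < 2^φ(m) for odd m ≥ 5 -/

lemma L1 : ∀ m : ℕ, Odd m → 5 ≤ m → 3 * m < 2 ^ m.totient := by
  intro m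
  induction m using Nat.strong_induction_on with
  | _ m IH =>
    intro hm h5
    have hm0 : m ≠ 0 := by omega
    have hm1 : m ≠ 1 := by omega
    set q := m.minFac with hqdef
    have hq : q.Prime := Nat.minFac_prime hm1
    have hqm : q ∣ m := Nat.minFac_dvd m
    have hqodd : Odd q := odd_dvd hm hqm
    have hq3 : 3 ≤ q := by
      obtain ⟨t, ht⟩ := hqodd
      have h2 := hq.two_le
      omega
    set k := m.factorization q with hkdef
    have hk : 1 ≤ k := (Nat.Prime.factorization_pos_of_dvd hq hm0 hqm)
    have hum : q ^ k * (m / q ^ k) = m := Nat.ordProj_mul_ordCompl_eq_self m q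
    set u := q ^ k with hudef
    set v := m / q ^ k with hvdef
    have hqv : ¬ q ∣ v := Nat.not_dvd_ordCompl hq hm0
    have hvdvd : v ∣ m := Nat.ordCompl_dvd m q
    have hvodd : Odd v := odd_dvd hm hvdvd
    have hudvd : u ∣ m := Nat.ordProj_dvd m q
    have huodd : Odd u := odd_dvd hm hudvd
    have hcop : Nat.Coprime u v := Nat.Coprime.pow_left k (hq.coprime_iff_not_dvd.mpr hqv)
    have htot : m.totient = u.totient * v.totient := by
      rw [← hum]; exact Nat.totient_mul hcop
    have hX : u.totient = q ^ (k - 1) * (q - 1) := Nat.totient_prime_pow hq hk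
    have hu3 : 3 ≤ u := le_trans hq3 (Nat.le_self_pow (by omega) q)
    rcases eq_or_ne v 1 with hv1 | hv1
    · -- m = u prime power
      have hmu : m = u := by rw [hv1, mul_one] at hum; omega
      have h5u : 5 ≤ u := by omega
      calc 3 * m = 3 * u := by omega
      _ < 2 ^ (q ^ (k - 1) * (q - 1)) := by rw [hudef]; exact PP hq3 hk (hudef ▸ h5u)
      _ = 2 ^ u.totient := by rw [hX]
      _ = 2 ^ m.totient := by rw [htot, hv1, Nat.totient_one, mul_one]
    · have hv3 : 3 ≤ v := by
        obtain ⟨t, ht⟩ := hvodd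
        omega
      have hv0 : 0 < v := by omega
      have hvm : v < m := by
        have : 1 * v < u * v := by
          apply Nat.mul_lt_mul_of_lt_of_le (by omega) (le_refl v) hv0
        omega
      rcases eq_or_ne u 3 with hu3' | hu3' 
      · -- u = 3, so q = 3, and v ≥ 5 (since 3 ∤ v)
        have hq3' : q = 3 := by
          by_contra h
          have h4 : 4 ≤ q := by omega
          have : 4 ≤ u := le_trans h4 (Nat.le_self_pow (by omega) q)
          omega
        have hvne3 : v ≠ 3 := by
          intro h
          apply hqv
          rw [h, hq3']
        have hv5 : 5 ≤ v := by
          obtain ⟨t, ht⟩ := hvodd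
          omega
        have hY := IH v hvm hvodd hv5
        set Y := v.totient with hYdef
        have hu_tot : u.totient = 2 := by rw [hu3']; decide
        rw [htot, hu_tot]
        have h2 : (3 * v + 1) ^ 2 ≤ (2 ^ Y) ^ 2 := Nat.pow_le_pow_left (by omega) 2
        have e0 : (2:ℕ) ^ (2 * Y) = (2 ^ Y) ^ 2 := by rw [← pow_mul, mul_comm]
        have e1 : (3 * v + 1) ^ 2 = 9 * (v * v) + 6 * v + 1 := by ring
        have e2 : v ≤ v * v := Nat.le_mul_of_pos_left v hv0
        have hmuv : m = 3 * v := by rw [← hum, hu3']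
        omega
      · have hu5 : 5 ≤ u := by
          obtain ⟨t, ht⟩ := huodd
          omega
        have hPPu : 3 * u < 2 ^ u.totient := by rw [hX]; exact PP hq3 hk hu5
        set X := u.totient with hXdef
        rcases eq_or_ne v 3 with hv3' | hv3'
        · -- v = 3
          have hv_tot : v.totient = 2 := by rw [hv3']; decide
          rw [htot, hv_tot]
          have h2 : (3 * u + 1) ^ 2 ≤ (2 ^ X) ^ 2 := Nat.pow_le_pow_left (by omega) 2
          have e0 : (2:ℕ) ^ (X * 2) = (2 ^ X) ^ 2 := by rw [← pow_mul]
          have e1 : (3 * u + 1) ^ 2 = 9 * (u * u) + 6 * u + 1 := by ring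
          have e2 : u ≤ u * u := Nat.le_mul_of_pos_left u (by omega)
          have hmuv : m = u * 3 := by rw [← hum, hv3']
          omega
        · have hv5 : 5 ≤ v := by
            obtain ⟨t, ht⟩ := hvodd
            omega
          have hYv := IH v hvm hvodd hv5
          set Y := v.totient with hYdef
          have hX4 : 4 ≤ X := four_le_of_two_pow hu5 hPPu
          have hY4 : 4 ≤ Y := four_le_of_two_pow hv5 hYv
          have hXY : X + Y ≤ X * Y := Nat.add_le_mul (by omega) (by omega)
          rw [htot]
          have h1 : 2 ^ (X + Y) ≤ 2 ^ (X * Y) := Nat.pow_le_pow_right (by norm_num) hXY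
          have h2 : (3 * u + 1) * (3 * v + 1) ≤ 2 ^ X * 2 ^ Y :=
            Nat.mul_le_mul (by omega) (by omega)
          have e0 : (2:ℕ) ^ (X + Y) = 2 ^ X * 2 ^ Y := pow_add 2 X Y
          have e1 : (3 * u + 1) * (3 * v + 1) = 9 * (u * v) + 3 * u + 3 * v + 1 := by ring
          have e2 : m = u * v := hum.symm
          omega

lemma two_pow_mul_odd_divisor {s e i : ℕ} (he : Odd e) (h : i ∣ 2 ^ s * e) :
    ∃ b t, b ≤ s ∧ t ∣ e ∧ Odd t ∧ i = 2 ^ b * t := by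
  have he0 : e ≠ 0 := by rintro rfl; exact (Nat.not_odd_iff_even.mpr Even.zero) he
  have hi0 : i ≠ 0 := by
    rintro rfl
    have h0 := Nat.eq_zero_of_zero_dvd h
    have : (2:ℕ) ^ s ≠ 0 := by positivity
    exact he0 (by
      rcases Nat.mul_eq_zero.mp h0 with h' | h'
      · exact absurd h' this
      · exact h')
  obtain ⟨b, t, hodd, rfl⟩ := Nat.exists_eq_two_pow_mul_odd hi0
  have hcop : Nat.Coprime t 2 := hodd.coprime_two_right
  have htd : t ∣ e := by
    have h1 : t ∣ 2 ^ s * e := (dvd_mul_left t (2 ^ b)).trans h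
    exact (Nat.Coprime.dvd_of_dvd_mul_left (Nat.Coprime.pow_right s hcop) h1)
  have hbs : b ≤ s := by
    have h1 : 2 ^ b ∣ 2 ^ s * e := (dvd_mul_right (2 ^ b) t).trans h
    have h2 : Nat.Coprime (2 ^ b) e := by
      apply Nat.Coprime.pow_left
      exact he.coprime_two_left
    have h3 : 2 ^ b ∣ 2 ^ s := (Nat.Coprime.dvd_of_dvd_mul_right h2 h1)
    exact (Nat.pow_dvd_pow_iff_le_right (by norm_num)).mp h3
  exact ⟨b, t, hbs, htd, hodd, rfl⟩

lemma F_odd {x : ℕ} (hx : 1 ≤ x) : Odd (2 ^ x + 1) := by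
  obtain ⟨y, rfl⟩ : ∃ y, x = y + 1 := ⟨x - 1, by omega⟩
  exact ⟨2 ^ y, by rw [pow_succ]; ring⟩

/-- any prime of 2^(2^a d)+1 is odd and has order 2^(a+1) e with e | d -/

lemma order_eq {a d p : ℕ} (hp : p.Prime) (hd : Odd d) (hdvd : p ∣ 2 ^ (2 ^ a * d) + 1) :
    p ≠ 2 ∧ ∃ e, e ∣ d ∧ orderOf (2 : ZMod p) = 2 ^ (a + 1) * e := by
  haveI : Fact p.Prime := ⟨hp⟩
  have hd0 : 0 < d := hd.pos
  have hx1 : 1 ≤ 2 ^ a * d := Nat.mul_pos (Nat.two_pow_pos a) hd0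
  have hp2 : p ≠ 2 := by
    intro h
    subst h
    obtain ⟨c, hc⟩ := F_odd hx1
    omega
  constructor
  · exact hp2
  have hcast : ((2 : ZMod p)) ^ (2 ^ a * d) = -1 := by
    have h0 : ((2 ^ (2 ^ a * d) + 1 : ℕ) : ZMod p) = 0 :=
      (ZMod.natCast_eq_zero_iff _ _).mpr hdvd
    push_cast at h0
    linear_combination h0
  have hord1 : orderOf (2 : ZMod p) ∣ 2 ^ (a + 1) * d := by
    apply orderOf_dvd_of_pow_eq_one
    have : (2 : ZMod p) ^ (2 ^ (a + 1) * d) = ((2 : ZMod p) ^ (2 ^ a * d)) ^ 2 := by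
      rw [← pow_mul]
      congr 1
      ring
    rw [this, hcast]
    ring
  have hord2 : ¬ orderOf (2 : ZMod p) ∣ 2 ^ a * d := by
    intro h
    have h1 : (2 : ZMod p) ^ (2 ^ a * d) = 1 := orderOf_dvd_iff_pow_eq_one.mp h
    rw [hcast] at h1
    have h2 : ((2 : ℕ) : ZMod p) = 0 := by push_cast; linear_combination -h1
    have h3 := (ZMod.natCast_eq_zero_iff 2 p).mp h2
    have h4 := Nat.le_of_dvd (by norm_num) h3
    have h5 := hp.two_le
    interval_cases p
    · exact hp2 rfl
  obtain ⟨b, t, hbs, htd, hodd, heq⟩ := two_pow_mul_odd_divisor hd hord1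
  refine ⟨t, htd, ?_⟩
  have hb : b = a + 1 := by
    by_contra hb
    have hble : b ≤ a := by omega
    apply hord2
    rw [heq]
    exact mul_dvd_mul (pow_dvd_pow 2 hble) htd
  rw [heq, hb]

lemma dvd_of_order {a D p : ℕ} (hp : p.Prime) (hp2 : p ≠ 2) (hD : Odd D) {e : ℕ}
    (he : e ∣ D) (hord : orderOf (2 : ZMod p) = 2 ^ (a + 1) * e) :
    p ∣ 2 ^ (2 ^ a * D) + 1 := by
  haveI : Fact p.Prime := ⟨hp⟩
  have hD0 : 0 < D := hD.pos
  have he0 : 0 < e := Nat.pos_of_ne_zero (by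
    rintro rfl
    exact hD0.ne' (Nat.eq_zero_of_zero_dvd he))
  set x : ZMod p := (2 : ZMod p) ^ (2 ^ a * e) with hxdef
  have hxsq : x * x = 1 := by
    rw [hxdef, ← pow_add]
    have he2 : 2 ^ a * e + 2 ^ a * e = 2 ^ (a + 1) * e := by ring
    rw [he2, ← hord]
    exact pow_orderOf_eq_one (2 : ZMod p)
  have hxne : x ≠ 1 := by
    intro h
    have : orderOf (2 : ZMod p) ∣ 2 ^ a * e := orderOf_dvd_of_pow_eq_one h
    rw [hord] at this
    have hle := Nat.le_of_dvd (Nat.mul_pos (Nat.two_pow_pos a) he0) this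
    have : (2:ℕ) ^ a < 2 ^ (a+1) := Nat.pow_lt_pow_right (by norm_num) (by omega)
    nlinarith [Nat.two_pow_pos a]
  have hxneg : x = -1 := by
    rcases mul_self_eq_one_iff.mp hxsq with h | h
    · exact absurd h hxne
    · exact h
  obtain ⟨c, hc⟩ := he
  have hcodd : Odd c := by
    have := hD
    rw [hc] at this
    exact (Nat.odd_mul.mp this).2
  have hpow : (2 : ZMod p) ^ (2 ^ a * D) = x ^ c := by
    rw [hxdef, ← pow_mul]
    congr 1
    rw [hc]
    ring
  have hfin : (2 : ZMod p) ^ (2 ^ a * D) = -1 := by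
    rw [hpow, hxneg, hcodd.neg_one_pow]
  have : ((2 ^ (2 ^ a * D) + 1 : ℕ) : ZMod p) = 0 := by
    push_cast
    rw [hfin]
    ring
  exact (ZMod.natCast_eq_zero_iff _ _).mp this

lemma F_eq_prod {a d : ℕ} (hd0 : 0 < d) :
    ((2:ℤ) ^ (2 ^ a * d) + 1) =
      ∏ i ∈ (2 ^ (a+1) * d).divisors \ (2 ^ a * d).divisors, (cyclotomic i ℤ).eval 2 := by
  have h1 : 0 < 2 ^ a * d := Nat.mul_pos (Nat.two_pow_pos a) hd0
  have h2 : 0 < 2 ^ (a+1) * d := Nat.mul_pos (Nat.two_pow_pos (a+1)) hd0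
  have hdvd : 2 ^ a * d ∣ 2 ^ (a+1) * d := mul_dvd_mul (pow_dvd_pow 2 (by omega)) dvd_rfl
  have hsub : (2 ^ a * d).divisors ⊆ (2 ^ (a+1) * d).divisors :=
    Nat.divisors_subset_of_dvd h2.ne' hdvd
  have hp1 : ∏ i ∈ (2 ^ a * d).divisors, (cyclotomic i ℤ).eval 2 = 2 ^ (2 ^ a * d) - 1 := by
    have := prod_cyclotomic_eq_X_pow_sub_one h1 ℤ
    calc ∏ i ∈ (2 ^ a * d).divisors, (cyclotomic i ℤ).eval 2
        = (∏ i ∈ (2 ^ a * d).divisors, cyclotomic i ℤ).eval 2 := by rw [eval_prod]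
      _ = ((X:ℤ[X]) ^ (2 ^ a * d) - 1).eval 2 := by rw [this]
      _ = 2 ^ (2 ^ a * d) - 1 := by simp
  have hp2 : ∏ i ∈ (2 ^ (a+1) * d).divisors, (cyclotomic i ℤ).eval 2
      = 2 ^ (2 ^ (a+1) * d) - 1 := by
    have := prod_cyclotomic_eq_X_pow_sub_one h2 ℤ
    calc ∏ i ∈ (2 ^ (a+1) * d).divisors, (cyclotomic i ℤ).eval 2
        = (∏ i ∈ (2 ^ (a+1) * d).divisors, cyclotomic i ℤ).eval 2 := by rw [eval_prod]
      _ = ((X:ℤ[X]) ^ (2 ^ (a+1) * d) - 1).eval 2 := by rw [this]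
      _ = 2 ^ (2 ^ (a+1) * d) - 1 := by simp
  have hsd := Finset.prod_sdiff (f := fun i => (cyclotomic i ℤ).eval 2) hsub
  rw [hp1, hp2] at hsd
  have hne : (2:ℤ) ^ (2 ^ a * d) - 1 ≠ 0 := by
    have : (2:ℤ) ^ (2 ^ a * d) ≥ 2 ^ 1 := by
      apply pow_le_pow_right₀ (by norm_num) (by omega)
    omega
  apply mul_right_cancel₀ hne
  rw [hsd]
  have hexp : 2 ^ (a+1) * d = (2 ^ a * d) * 2 := by ring
  rw [hexp, pow_mul]
  ring

/-- Φ_n(2) * F_e divides F_d for e proper divisor of d -/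

lemma Q_mul_F_dvd {a d e : ℕ} (hd : Odd d) (he : e ∣ d) (hed : e ≠ d) :
    (cyclotomic (2 ^ (a+1) * d) ℤ).eval 2 * ((2:ℤ) ^ (2 ^ a * e) + 1) ∣
      ((2:ℤ) ^ (2 ^ a * d) + 1) := by
  have hd0 : 0 < d := hd.pos
  have he0 : 0 < e := Nat.pos_of_ne_zero (by rintro rfl; exact hd0.ne' (Nat.eq_zero_of_zero_dvd he))
  have heodd : Odd e := by
    by_contra h
    rw [Nat.not_odd_iff_even] at h
    obtain ⟨c, hc⟩ := he
    rw [← Nat.not_even_iff_odd] at hd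
    exact hd (by rw [hc]; exact h.mul_right c)
  rw [F_eq_prod hd0, F_eq_prod he0]
  set Sd := (2 ^ (a+1) * d).divisors \ (2 ^ a * d).divisors with hSd
  set Se := (2 ^ (a+1) * e).divisors \ (2 ^ a * e).divisors with hSe
  have hnmem : (2 ^ (a+1) * d) ∉ Se := by
    intro hmem
    rw [hSe, Finset.mem_sdiff, Nat.mem_divisors] at hmem
    have hdd : d ∣ e := by
      have := hmem.1.1
      exact (Nat.mul_dvd_mul_iff_left (show 0 < 2^(a+1) by positivity)).mp this
    exact hed (Nat.dvd_antisymm he hdd)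
  have hsub2 : insert (2 ^ (a+1) * d) Se ⊆ Sd := by
    intro i hi
    rw [Finset.mem_insert] at hi
    rcases hi with rfl | hi
    · rw [hSd, Finset.mem_sdiff, Nat.mem_divisors]
      refine ⟨⟨dvd_rfl, by positivity⟩, ?_⟩
      intro hcon
      rw [Nat.mem_divisors] at hcon
      have hle := Nat.le_of_dvd (by positivity) hcon.1
      have : (2:ℕ)^a * d < 2 ^ (a+1) * d := by
        have : (2:ℕ)^a < 2^(a+1) := Nat.pow_lt_pow_right (by norm_num) (by omega)
        exact Nat.mul_lt_mul_of_lt_of_le this (le_refl d) hd0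
      omega
    · rw [hSe, Finset.mem_sdiff, Nat.mem_divisors] at hi
      rw [hSd, Finset.mem_sdiff, Nat.mem_divisors]
      obtain ⟨⟨hi1, _⟩, hi2⟩ := hi
      have hi2' : ¬ i ∣ 2 ^ a * e := by
        intro h
        exact hi2 (Nat.mem_divisors.mpr ⟨h, by positivity⟩)
      refine ⟨⟨hi1.trans (mul_dvd_mul_left _ he), by positivity⟩, ?_⟩
      intro hcon
      rw [Nat.mem_divisors] at hcon
      -- i | 2^(a+1) e, i ∤ 2^a e, so 2^(a+1) || i, contradiction with i | 2^a d
      obtain ⟨b, t, hbs, htd, hodd, rfl⟩ := two_pow_mul_odd_divisor heodd hi1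
      have hb : b = a + 1 := by
        by_contra hb
        exact hi2' (mul_dvd_mul (pow_dvd_pow 2 (by omega)) htd)
      subst hb
      obtain ⟨b', t', hbs', htd', hodd', heq'⟩ := two_pow_mul_odd_divisor hd hcon.1
      have hdvd1 : 2 ^ (a+1) ∣ 2 ^ b' * t' := by
        rw [← heq']
        exact dvd_mul_right _ t
      have hcop' : Nat.Coprime (2 ^ (a+1)) t' := Nat.Coprime.pow_left _ hodd'.coprime_two_left
      have hdvd2 : 2 ^ (a+1) ∣ 2 ^ b' := Nat.Coprime.dvd_of_dvd_mul_right hcop' hdvd1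
      have := (Nat.pow_dvd_pow_iff_le_right (show 1 < 2 by norm_num)).mp hdvd2
      omega
  calc (cyclotomic (2 ^ (a+1) * d) ℤ).eval 2 * ∏ i ∈ Se, (cyclotomic i ℤ).eval 2
      = ∏ i ∈ insert (2 ^ (a+1) * d) Se, (cyclotomic i ℤ).eval 2 := by
        rw [Finset.prod_insert hnmem]
    _ ∣ ∏ i ∈ Sd, (cyclotomic i ℤ).eval 2 :=
        Finset.prod_dvd_prod_of_subset _ _ _ hsub2

lemma cyclotomic_pow_eval {q w : ℕ} (hq : q.Prime) :
    ∀ k, 1 ≤ k → ∀ x : ℝ, (cyclotomic (w * q ^ k) ℝ).eval x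
      = (cyclotomic (w * q) ℝ).eval (x ^ (q ^ (k - 1))) := by
  intro k
  induction k with
  | zero => omega
  | succ n ih =>
    intro _ x
    rcases Nat.eq_zero_or_pos n with rfl | hn
    · simp
    · have hdvd : q ∣ w * q ^ n := Dvd.dvd.mul_left (dvd_pow_self q hn.ne') w
      have h1 : cyclotomic (w * q ^ (n+1)) ℝ = expand ℝ q (cyclotomic (w * q ^ n) ℝ) := by
        rw [cyclotomic_expand_eq_cyclotomic hq hdvd]
        congr 1
        rw [pow_succ]
        ring
      rw [h1, expand_eval, ih hn (x ^ q)]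
      congr 1
      rw [← pow_mul]
      congr 1
      have : q ^ n = q ^ (n - 1) * q := by
        obtain ⟨j, rfl⟩ : ∃ j, n = j + 1 := ⟨n - 1, by omega⟩
        simp [pow_succ]
      rw [Nat.add_sub_cancel]
      rw [this]
      ring

/-- the key lower bound: Φ_{2^(a+1) d}(2) > d for odd d > 1, d ≠ 3 -/

lemma cyclo_gt {a d : ℕ} (hd : Odd d) (hd1 : 1 < d) (hd3 : d ≠ 3) :
    (d : ℤ) < (cyclotomic (2 ^ (a+1) * d) ℤ).eval 2 := by
  have hd0 : d ≠ 0 := by omega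
  have hne : d.primeFactors.Nonempty := (Nat.nonempty_primeFactors).mpr hd1
  set q := d.primeFactors.max' hne with hqdef
  have hqmem : q ∈ d.primeFactors := Finset.max'_mem _ _
  have hq : q.Prime := Nat.prime_of_mem_primeFactors hqmem
  have hqd : q ∣ d := Nat.dvd_of_mem_primeFactors hqmem
  have hqodd : Odd q := odd_dvd hd hqd
  have hq3 : 3 ≤ q := by
    obtain ⟨t, ht⟩ := hqodd
    have := hq.two_le
    omega
  set k := d.factorization q with hkdef
  have hk : 1 ≤ k := Nat.Prime.factorization_pos_of_dvd hq hd0 hqd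
  have hum : q ^ k * (d / q ^ k) = d := Nat.ordProj_mul_ordCompl_eq_self d q
  set u := q ^ k with hudef
  set m := d / q ^ k with hmdef
  have hqm : ¬ q ∣ m := Nat.not_dvd_ordCompl hq hd0
  have hmdvd : m ∣ d := Nat.ordCompl_dvd d q
  have hmodd : Odd m := odd_dvd hd hmdvd
  have huodd : Odd u := odd_dvd hd (Nat.ordProj_dvd d q)
  have hm0 : 0 < m := hmodd.pos
  have hu3 : 3 ≤ u := le_trans hq3 (Nat.le_self_pow (by omega) q)
  -- if m ≠ 1 then q ≥ 5
  have hq5 : m ≠ 1 → 5 ≤ q := by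
    intro hm1
    have hr := Nat.minFac_prime hm1
    set r := m.minFac with hrdef
    have hrd : r ∣ d := (Nat.minFac_dvd m).trans hmdvd
    have hrmem : r ∈ d.primeFactors := Nat.mem_primeFactors.mpr ⟨hr, hrd, hd0⟩
    have hrq : r ≤ q := Finset.le_max' _ _ hrmem
    have hrne : r ≠ q := by
      intro h
      exact hqm (h ▸ Nat.minFac_dvd m)
    have hrodd : Odd r := odd_dvd hd hrd
    obtain ⟨t, ht⟩ := hrodd
    obtain ⟨t', ht'⟩ := hqodd
    have := hr.two_le
    omega
  set X := u.totient with hXdef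
  have hXray : X = q ^ (k - 1) * (q - 1) := Nat.totient_prime_pow hq hk
  have hX1 : 1 ≤ X := Nat.totient_pos.mpr (by omega)
  set Y := m.totient with hYdef
  have hY1 : 1 ≤ Y := Nat.totient_pos.mpr hm0
  -- KEY finite inequality
  have hkey : d < 2 ^ ((X - 1) * Y) := by
    have hP : (2:ℕ) ^ X = 2 * 2 ^ (X - 1) := by
      rw [← pow_succ']
      congr 1
      omega
    rcases eq_or_ne m 1 with hm1 | hm1
    · -- d = u
      have hdu : d = u := by rw [hm1, mul_one] at hum; omega
      have hu5 : 5 ≤ u := by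
        obtain ⟨t, ht⟩ := huodd
        omega
      have hPP : 3 * u < 2 ^ X := by rw [hXray, hudef]; exact PP hq3 hk (hudef ▸ hu5)
      have hY' : Y = 1 := by rw [hYdef, hm1]; exact Nat.totient_one
      rw [hY', mul_one]
      omega
    · have hq5' := hq5 hm1
      have hu5 : 5 ≤ u := le_trans hq5' (Nat.le_self_pow (by omega) q)
      have hPP : 3 * u < 2 ^ X := by rw [hXray, hudef]; exact PP hq3 hk (hudef ▸ hu5)
      have hX4 : 4 ≤ X := four_le_of_two_pow hu5 hPP
      rcases eq_or_ne m 3 with hm3 | hm3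
      · have hY2 : Y = 2 := by rw [hYdef, hm3]; decide
        rw [hY2]
        have h2 : (3 * u + 1) ^ 2 ≤ (2 ^ (X - 1) * 2) ^ 2 := by
          apply Nat.pow_le_pow_left
          omega
        have e0 : (2:ℕ) ^ ((X - 1) * 2) = 2 ^ (X-1) * 2 ^ (X-1) := by
          rw [pow_mul, pow_two]
        have e1 : (3 * u + 1) ^ 2 = 9 * (u * u) + 6 * u + 1 := by ring
        have e2 : (2 ^ (X - 1) * 2) ^ 2 = 4 * (2 ^ (X-1) * 2 ^ (X-1)) := by ring
        have e3 : u ≤ u * u := Nat.le_mul_of_pos_left u (by omega)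
        have e4 : d = u * 3 := by rw [← hum, hm3]
        omega
      · have hm5 : 5 ≤ m := by
          obtain ⟨t, ht⟩ := hmodd
          omega
        have hL1 : 3 * m < 2 ^ Y := L1 m hmodd hm5
        have hY4 : 4 ≤ Y := four_le_of_two_pow hm5 hL1
        have hXY : (X - 1) + Y ≤ (X - 1) * Y := Nat.add_le_mul (by omega) (by omega)
        have h1 : 2 ^ ((X-1) + Y) ≤ 2 ^ ((X-1) * Y) := Nat.pow_le_pow_right (by norm_num) hXY
        have e0 : (2:ℕ) ^ ((X-1) + Y) = 2 ^ (X-1) * 2 ^ Y := pow_add 2 _ _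
        have h2 : (u + 1) * (3 * m + 1) ≤ 2 ^ (X-1) * 2 ^ Y := by
          apply Nat.mul_le_mul
          · omega
          · omega
        have e1 : (u + 1) * (3 * m + 1) = 3 * (u * m) + u + 3 * m + 1 := by ring
        have e2 : d = u * m := hum.symm
        have e3 : u * m ≤ 3 * (u * m) := by omega
        omega
  -- analytic part
  have hwq : ¬ q ∣ 2 ^ (a+1) * m := by
    intro h
    rcases (Nat.Prime.dvd_mul hq).mp h with h' | h'
    · have h2 := hq.dvd_of_dvd_pow h'
      have := Nat.le_of_dvd (by norm_num) h2
      omega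
    · exact hqm h'
  set w := 2 ^ (a+1) * m with hwdef
  have hw2 : 2 ≤ w := by
    have : (2:ℕ) ≤ 2 ^ (a+1) := Nat.le_self_pow (by omega) 2  -- 2 ≤ 2^(a+1)? it's 2^1 ≤ 2^(a+1)
    calc (2:ℕ) ≤ 2 ^ (a+1) := by
          calc (2:ℕ) = 2 ^ 1 := by norm_num
          _ ≤ 2 ^ (a+1) := Nat.pow_le_pow_right (by norm_num) (by omega)
      _ ≤ 2 ^ (a+1) * m := Nat.le_mul_of_pos_right _ hm0
  have hrw : 2 ^ (a+1) * d = w * q ^ k := by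
    rw [hwdef, ← hum]
    ring
  set y : ℝ := (2:ℝ) ^ (q ^ (k-1)) with hydef
  have hy1 : (1:ℝ) < y := by
    rw [hydef]
    apply one_lt_pow₀ (by norm_num)
    positivity
  have hy2 : (2:ℝ) ≤ y := by
    rw [hydef]
    calc (2:ℝ) = 2 ^ 1 := by norm_num
    _ ≤ 2 ^ (q ^ (k-1)) := by
        apply pow_le_pow_right₀ (by norm_num)
        exact Nat.one_le_pow _ _ (by omega)
  have hid1 : (cyclotomic (2 ^ (a+1) * d) ℝ).eval 2 = (cyclotomic (w * q) ℝ).eval y := by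
    rw [hrw, cyclotomic_pow_eval hq k hk 2]
  have hid2 : (cyclotomic (w * q) ℝ).eval y * (cyclotomic w ℝ).eval y
      = (cyclotomic w ℝ).eval (y ^ q) := by
    calc (cyclotomic (w * q) ℝ).eval y * (cyclotomic w ℝ).eval y
        = ((cyclotomic (w * q) ℝ) * cyclotomic w ℝ).eval y := (eval_mul).symm
      _ = (expand ℝ q (cyclotomic w ℝ)).eval y := by
          rw [cyclotomic_expand_eq_cyclotomic_mul hq hwq]
      _ = (cyclotomic w ℝ).eval (y ^ q) := expand_eval q (cyclotomic w ℝ) y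
  have hcypos : 0 < (cyclotomic w ℝ).eval y := cyclotomic_pos' w hy1
  have hyq1 : (1:ℝ) < y ^ q := one_lt_pow₀ hy1 (by omega)
  have hlow : ((y ^ q) - 1) ^ w.totient < (cyclotomic w ℝ).eval (y ^ q) :=
    sub_one_pow_totient_lt_cyclotomic_eval hw2 hyq1
  have hup : (cyclotomic w ℝ).eval y ≤ (y + 1) ^ w.totient :=
    cyclotomic_eval_le_add_one_pow_totient hy1 w
  set B : ℝ := (2:ℝ) ^ (X - 1) with hBdef
  have hB1 : (1:ℝ) ≤ B := one_le_pow₀ (by norm_num)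
  have hbase : B * (y + 1) ≤ y ^ q - 1 := by
    have hyX : y ^ (q - 1) = 2 * B := by
      rw [hydef, hBdef, ← pow_mul, ← pow_succ']
      congr 1
      rw [hXray] at *
      omega
    have hq2 : 2 ≤ q := hq.two_le
    have hyq : y ^ q = y ^ (q-1) * y := by
      rw [← pow_succ]
      congr 1
      omega
    have hyy : y ^ (q - 1) ≥ y := by
      calc y = y ^ 1 := (pow_one y).symm
      _ ≤ y ^ (q-1) := pow_le_pow_right₀ (by linarith) (by omega)
    nlinarith
  -- totient comparison
  have hYle : Y ≤ w.totient := by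
    have hcop : Nat.Coprime (2 ^ (a+1)) m := Nat.Coprime.pow_left _ hmodd.coprime_two_left
    have htm : w.totient = (2 ^ (a+1)).totient * m.totient := by
      rw [hwdef]; exact Nat.totient_mul hcop
    have hpos : 1 ≤ (2 ^ (a+1)).totient := Nat.totient_pos.mpr (by positivity)
    rw [htm, hYdef]
    exact Nat.le_mul_of_pos_left _ hpos
  -- put it together over ℝ
  have hfinal : (d:ℝ) < (cyclotomic (2 ^ (a+1) * d) ℝ).eval 2 := by
    rw [hid1]
    set c : ℝ := (cyclotomic w ℝ).eval y with hcdef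
    set Qr : ℝ := (cyclotomic (w * q) ℝ).eval y with hQdef
    have hmain : B ^ w.totient * c < Qr * c := by
      calc B ^ w.totient * c ≤ B ^ w.totient * (y + 1) ^ w.totient := by
            apply mul_le_mul_of_nonneg_left hup
            positivity
        _ = (B * (y + 1)) ^ w.totient := (mul_pow _ _ _).symm
        _ ≤ (y ^ q - 1) ^ w.totient := by
            apply pow_le_pow_left₀ _ hbase
            positivity
        _ < (cyclotomic w ℝ).eval (y ^ q) := hlow
        _ = Qr * c := hid2.symm
    have hQB : B ^ w.totient < Qr := lt_of_mul_lt_mul_right hmain hcypos.le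
    have hdB : (d:ℝ) < B ^ Y := by
      have : ((2:ℝ)) ^ ((X - 1) * Y) = B ^ Y := by
        rw [hBdef, ← pow_mul]
      calc (d:ℝ) < (2:ℝ) ^ ((X - 1) * Y) := by exact_mod_cast hkey
        _ = B ^ Y := this
    calc (d:ℝ) < B ^ Y := hdB
      _ ≤ B ^ w.totient := pow_le_pow_right₀ hB1 hYle
      _ < Qr := hQB
  -- transfer to ℤ
  have hcast := cyclotomic.eval_apply (R := ℤ) (S := ℝ) 2 (2 ^ (a+1) * d) (algebraMap ℤ ℝ)
  have h2 : (algebraMap ℤ ℝ) 2 = (2:ℝ) := by norm_num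
  rw [h2] at hcast
  rw [hcast] at hfinal
  have : ((d:ℤ) : ℝ) < ((eval 2 (cyclotomic (2 ^ (a+1) * d) ℤ) : ℤ) : ℝ) := by
    rw [algebraMap_int_eq] at hfinal
    simpa using hfinal
  exact_mod_cast this

lemma fact_LTE {a d e p : ℕ} (hp : p.Prime) (hp2 : p ≠ 2) (hd : Odd d) (he : e ∣ d)
    (hpe : p ∣ 2 ^ (2 ^ a * e) + 1) :
    (2 ^ (2 ^ a * d) + 1).factorization p
      = (2 ^ (2 ^ a * e) + 1).factorization p + (d / e).factorization p := by
  haveI : Fact p.Prime := ⟨hp⟩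
  have hd0 : 0 < d := hd.pos
  have he0 : 0 < e := Nat.pos_of_ne_zero (by rintro rfl; exact hd0.ne' (Nat.eq_zero_of_zero_dvd he))
  have hede : e * (d / e) = d := Nat.mul_div_cancel' he
  have hcodd : Odd (d / e) := by
    have : Odd (e * (d / e)) := by rw [hede]; exact hd
    exact (Nat.odd_mul.mp this).2
  have hpodd : Odd p := hp.odd_of_ne_two hp2
  set x := 2 ^ (2 ^ a * e) with hxdef
  have hx : ¬ p ∣ x := by
    intro h
    have := hp.dvd_of_dvd_pow h
    have := Nat.le_of_dvd (by norm_num) this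
    have := hp.two_le
    omega
  have hxy : p ∣ x + 1 := hpe
  have hLTE := padicValNat.pow_add_pow (p := p) hpodd hxy hx hcodd
  have hxp : x ^ (d / e) = 2 ^ (2 ^ a * d) := by
    rw [hxdef, ← pow_mul]
    congr 1
    rw [mul_assoc, hede]
  rw [one_pow, hxp] at hLTE
  rw [Nat.factorization_def _ hp, Nat.factorization_def _ hp, Nat.factorization_def _ hp]
  exact hLTE

lemma exists_primitive {a M d : ℕ} (hM : Odd M) (hdM : d ∣ M) (hd3 : d ≠ 3) (hd0 : 0 < d) :
    ∃ p, p.Prime ∧ p ∣ 2 ^ (2 ^ a * M) + 1 ∧ orderOf (2 : ZMod p) = 2 ^ (a + 1) * d := by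
  have hdodd : Odd d := odd_dvd hM hdM
  rcases eq_or_lt_of_le (show 1 ≤ d by omega) with hd1 | hd1
  · -- d = 1
    have hd1' : d = 1 := hd1.symm
    subst hd1'
    set F := 2 ^ (2 ^ a * 1) + 1 with hFdef
    have hF3 : 3 ≤ F := by
      rw [hFdef]
      have : (2:ℕ) ≤ 2 ^ (2 ^ a * 1) := by
        calc (2:ℕ) = 2 ^ 1 := by norm_num
        _ ≤ 2 ^ (2 ^ a * 1) := Nat.pow_le_pow_right (by norm_num)
              (by simpa using Nat.one_le_two_pow)
      omega
    have hFne1 : F ≠ 1 := by omega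
    have hp : F.minFac.Prime := Nat.minFac_prime hFne1
    have hpF : F.minFac ∣ F := Nat.minFac_dvd F
    obtain ⟨hp2, e, he1, hord⟩ := order_eq hp (by norm_num) hpF
    have he' : e = 1 := Nat.eq_one_of_dvd_one he1
    subst he'
    exact ⟨F.minFac, hp, dvd_of_order hp hp2 hM (one_dvd M) hord, hord⟩
  · -- 1 < d
    set n := 2 ^ (a + 1) * d with hndef
    set Q := ((cyclotomic n ℤ).eval 2).toNat with hQdef
    have hQpos : (0:ℤ) < (cyclotomic n ℤ).eval 2 := cyclotomic_pos' n (by norm_num)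
    have hQcast : (Q:ℤ) = (cyclotomic n ℤ).eval 2 := Int.toNat_of_nonneg hQpos.le
    have hQgtd : d < Q := by
      have h := cyclo_gt (a := a) hdodd hd1 hd3
      rw [← hQcast] at h
      exact_mod_cast h
    have hQdvdF : ∀ e, e ∣ d → e ≠ d → Q * (2 ^ (2 ^ a * e) + 1) ∣ 2 ^ (2 ^ a * d) + 1 := by
      intro e he hed
      have h := Q_mul_F_dvd (a := a) hdodd he hed
      rw [← hQcast] at h
      have h2 : ((Q * (2 ^ (2 ^ a * e) + 1) : ℕ) : ℤ) ∣ ((2 ^ (2 ^ a * d) + 1 : ℕ) : ℤ) := by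
        push_cast
        exact h
      exact_mod_cast h2
    have hQdvd : Q ∣ 2 ^ (2 ^ a * d) + 1 :=
      (dvd_mul_right Q _).trans (hQdvdF 1 (one_dvd d) (by omega))
    by_cases hex : ∃ p, p.Prime ∧ p ∣ Q ∧ orderOf (2 : ZMod p) = n
    · obtain ⟨p, hp, hpQ, hord⟩ := hex
      have hpF : p ∣ 2 ^ (2 ^ a * d) + 1 := hpQ.trans hQdvd
      obtain ⟨hp2, _⟩ := order_eq hp hdodd hpF
      exact ⟨p, hp, dvd_of_order hp hp2 hM hdM hord, hord⟩
    · exfalso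
      push_neg at hex
      have hQ0 : Q ≠ 0 := by omega
      have hd0' : d ≠ 0 := by omega
      have hQd : Q ∣ d := by
        rw [← Nat.factorization_le_iff_dvd hQ0 hd0']
        rw [Finsupp.le_def]
        intro p
        by_cases hpp : p.Prime
        · by_cases hpQ : p ∣ Q
          · have hpF : p ∣ 2 ^ (2 ^ a * d) + 1 := hpQ.trans hQdvd
            obtain ⟨hp2, e, hed, hord⟩ := order_eq hpp hdodd hpF
            have hne : e ≠ d := by
              intro h
              exact hex p hpp hpQ (by rw [hord, h])
            have hpFe : p ∣ 2 ^ (2 ^ a * e) + 1 :=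
              dvd_of_order hpp hp2 (odd_dvd hdodd hed) dvd_rfl hord
            have hmul := hQdvdF e hed hne
            have hFe0 : 2 ^ (2 ^ a * e) + 1 ≠ 0 := by positivity
            have hFd0 : 2 ^ (2 ^ a * d) + 1 ≠ 0 := by positivity
            have h1 : (Q * (2 ^ (2 ^ a * e) + 1)).factorization p
                ≤ (2 ^ (2 ^ a * d) + 1).factorization p := by
              have := (Nat.factorization_le_iff_dvd (Nat.mul_ne_zero hQ0 hFe0) hFd0).mpr hmul
              exact Finsupp.le_def.mp this p
            rw [Nat.factorization_mul hQ0 hFe0] at h1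
            simp only [Finsupp.coe_add, Pi.add_apply] at h1
            have h2 := fact_LTE hpp hp2 hdodd hed hpFe
            have hde0 : d / e ≠ 0 := by
              have := Nat.div_dvd_of_dvd hed
              have h0 : 0 < d / e := Nat.div_pos (Nat.le_of_dvd (by omega) hed)
                (Nat.pos_of_ne_zero (by rintro rfl; exact hd0' (Nat.eq_zero_of_zero_dvd hed)))
              omega
            have h3 : (d / e).factorization p ≤ d.factorization p := by
              have := (Nat.factorization_le_iff_dvd hde0 hd0').mpr (Nat.div_dvd_of_dvd hed)
              exact Finsupp.le_def.mp this p
            omega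
          · rw [Nat.factorization_eq_zero_of_not_dvd hpQ]
            exact Nat.zero_le _
        · rw [Nat.factorization_eq_zero_of_not_prime Q hpp]
          exact Nat.zero_le _
      have := Nat.le_of_dvd (by omega) hQd
      omega

end TauAux

open TauAux

/-- If `N = 2^a · M` with `M` odd, then `4 τ(2^N + 1) ≥ 2^{τ(M)}`. -/
theorem four_mul_tau_pow_add_one_ge (N a M : ℕ) (hN : 1 ≤ N)
    (hM : Odd M) (hNaM : N = 2 ^ a * M) :
    2 ^ tau M ≤ 4 * tau (2 ^ N + 1) := by
  subst hNaM
  have hM0 : 0 < M := hM.pos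
  set F := 2 ^ (2 ^ a * M) + 1 with hFdef
  have hF0 : F ≠ 0 := by positivity
  classical
  set s := M.divisors.erase 3 with hsdef
  have hkey : ∀ d ∈ s, ∃ p, p.Prime ∧ p ∣ F ∧ orderOf (2 : ZMod p) = 2 ^ (a + 1) * d := by
    intro d hd
    have hd3 : d ≠ 3 := Finset.ne_of_mem_erase hd
    have hdM : d ∣ M := (Nat.mem_divisors.mp (Finset.mem_of_mem_erase hd)).1
    have hd0 : 0 < d := Nat.pos_of_mem_divisors (Finset.mem_of_mem_erase hd)
    exact exists_primitive hM hdM hd3 hd0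
  set f : ℕ → ℕ := fun d =>
    if h : ∃ p, p.Prime ∧ p ∣ F ∧ orderOf (2 : ZMod p) = 2 ^ (a + 1) * d then h.choose else 0
    with hfdef
  have hf : ∀ d ∈ s, (f d).Prime ∧ f d ∣ F ∧ orderOf (2 : ZMod (f d)) = 2 ^ (a + 1) * d := by
    intro d hd
    have h := hkey d hd
    have hfd : f d = h.choose := by rw [hfdef]; exact dif_pos h
    rw [hfd]
    exact h.choose_spec
  have hcard : s.card ≤ F.primeFactors.card := by
    apply Finset.card_le_card_of_injOn f
    · intro d hd
      obtain ⟨h1, h2, _⟩ := hf d hd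
      exact Nat.mem_primeFactors.mpr ⟨h1, h2, hF0⟩
    · intro d1 h1 d2 h2 heq
      obtain ⟨_, _, ho1⟩ := hf d1 h1
      obtain ⟨_, _, ho2⟩ := hf d2 h2
      rw [heq, ho2] at ho1
      exact (Nat.eq_of_mul_eq_mul_left (show 0 < 2 ^ (a + 1) by positivity) ho1).symm
  have htau : 2 ^ F.primeFactors.card ≤ tau F := by
    rw [tau, Nat.card_divisors hF0]
    calc (2:ℕ) ^ F.primeFactors.card = ∏ _p ∈ F.primeFactors, 2 := by
          rw [Finset.prod_const]
      _ ≤ F.primeFactors.prod (F.factorization · + 1) := by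
          apply Finset.prod_le_prod'
          intro p hp
          have h1 : 1 ≤ F.factorization p :=
            Nat.Prime.factorization_pos_of_dvd (Nat.prime_of_mem_primeFactors hp) hF0
              (Nat.dvd_of_mem_primeFactors hp)
          omega
  have hstau : tau M ≤ s.card + 1 := by
    rw [tau, hsdef]
    have := Finset.pred_card_le_card_erase (s := M.divisors) (a := 3)
    omega
  calc 2 ^ tau M ≤ 2 ^ (s.card + 1) := Nat.pow_le_pow_right (by norm_num) hstau
    _ = 2 * 2 ^ s.card := by rw [pow_succ]; ring
    _ ≤ 2 * 2 ^ F.primeFactors.card := by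
        have := Nat.pow_le_pow_right (show 1 ≤ 2 by norm_num) hcard
        omega
    _ ≤ 2 * tau F := by omega
    _ ≤ 4 * tau F := by omega
end
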